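/- For ρ > 0, β > 0, and ω_d, ω_c > 0, the cubic fixed-point equation Γ = 1/(ρ + β·ω_c/(1+ω_c·Γ) + β·ω_d/(1+ω_d·Γ)) has a unique positive real solution Γ. -/

import Mathlib

theorem cbf_fixed_point_unique (ρ β ωd ωc : ℝ) (hρ : 0 < ρ) (hβ : 0 < β)
    (hωd : 0 < ωd) (hωc : 0 < ωc) :
    ∃! Γ : ℝ, 0 < Γ ∧
      Γ = 1 / (ρ + β * ωc / (1 + ωc * Γ) + β * ωd / (1 + ωd * Γ)) := by
  set G : ℝ → ℝ := fun x => ρ * x + β * (ωc * x / (1 + ωc * x)) + β * (ωd * x / (1 + ωd * x))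
    with hG
  have hden : ∀ x : ℝ, 0 ≤ x → 0 < 1 + ωc * x ∧ 0 < 1 + ωd * x := by
    intro x hx
    constructor <;> nlinarith
  have hkey : ∀ x : ℝ, 0 < x →
      ((x = 1 / (ρ + β * ωc / (1 + ωc * x) + β * ωd / (1 + ωd * x))) ↔ G x = 1) := by
    intro x hx
    obtain ⟨h1, h2⟩ := hden x hx.le
    have hD : 0 < ρ + β * ωc / (1 + ωc * x) + β * ωd / (1 + ωd * x) := by positivity
    have hxD : x * (ρ + β * ωc / (1 + ωc * x) + β * ωd / (1 + ωd * x)) = G x := by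
      simp only [hG]
      field_simp
    rw [eq_div_iff hD.ne', hxD]
  have hmono : ∀ a b : ℝ, 0 ≤ a → a < b → G a < G b := by
    intro a b ha hab
    have hb : 0 ≤ b := le_of_lt (lt_of_le_of_lt ha hab)
    obtain ⟨ha1, ha2⟩ := hden a ha
    obtain ⟨hb1, hb2⟩ := hden b hb
    have hc : ωc * a / (1 + ωc * a) < ωc * b / (1 + ωc * b) := by
      rw [div_lt_div_iff₀ ha1 hb1]; nlinarith
    have hd : ωd * a / (1 + ωd * a) < ωd * b / (1 + ωd * b) := by
      rw [div_lt_div_iff₀ ha2 hb2]; nlinarith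
    have h1 := mul_lt_mul_of_pos_left hc hβ
    have h2 := mul_lt_mul_of_pos_left hd hβ
    have h3 := mul_lt_mul_of_pos_left hab hρ
    simp only [hG]
    linarith
  -- continuity on [0, 1/ρ]
  have hcont : ContinuousOn G (Set.Icc 0 (1/ρ)) := by
    apply ContinuousOn.add
    apply ContinuousOn.add
    · exact (continuous_const.mul continuous_id).continuousOn
    · apply ContinuousOn.mul continuousOn_const
      apply ContinuousOn.div
      · exact (continuous_const.mul continuous_id).continuousOn
      · exact (continuous_const.add (continuous_const.mul continuous_id)).continuousOn
      · intro x hx; exact (hden x hx.1).1.ne'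
    · apply ContinuousOn.mul continuousOn_const
      apply ContinuousOn.div
      · exact (continuous_const.mul continuous_id).continuousOn
      · exact (continuous_const.add (continuous_const.mul continuous_id)).continuousOn
      · intro x hx; exact (hden x hx.1).2.ne'
  have hM : (0:ℝ) ≤ 1/ρ := by positivity
  have hG0 : G 0 = 0 := by simp [hG]
  have hGM : 1 ≤ G (1/ρ) := by
    obtain ⟨h1, h2⟩ := hden (1/ρ) hM
    have : ρ * (1/ρ) = 1 := by field_simp
    simp only [hG]
    have hc : 0 ≤ β * (ωc * (1/ρ) / (1 + ωc * (1/ρ))) := by positivity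
    have hd : 0 ≤ β * (ωd * (1/ρ) / (1 + ωd * (1/ρ))) := by positivity
    linarith
  have h1mem : (1:ℝ) ∈ Set.Icc (G 0) (G (1/ρ)) := by
    rw [hG0]; exact ⟨zero_le_one, hGM⟩
  obtain ⟨x, hxmem, hGx⟩ := intermediate_value_Icc hM hcont h1mem
  have hxpos : 0 < x := by
    rcases lt_or_eq_of_le hxmem.1 with h | h
    · exact h
    · exfalso; rw [← h] at hGx; rw [hG0] at hGx; norm_num at hGx
  refine ⟨x, ⟨hxpos, (hkey x hxpos).mpr hGx⟩, ?_⟩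
  rintro y ⟨hypos, hy⟩
  have hGy : G y = 1 := (hkey y hypos).mp hy
  rcases lt_trichotomy y x with h | h | h
  · have := hmono y x hypos.le h; rw [hGy, hGx] at this; exact absurd this (lt_irrefl 1)
  · exact h
  · have := hmono x y hxpos.le h; rw [hGy, hGx] at this; exact absurd this (lt_irrefl 1)
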